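/- Let n ≥ 1 and let E : ℝ^n → ℝ (ℝ^n = EuclideanSpace ℝ (Fin n)) be continuously differentiable and bounded below. Let ν ∈ (0, 1) and constants λ̄ > 0, d̄ > 0, M > 0. Let (U^k), (d_k), (t_k) be sequences with t_k ∈ (0, 1] and U^{k+1} = U^k + t_k•d_k, and write g_k = ∇E(U^k). Suppose for every k: (i) −⟪g_k, d_k⟫ ≥ ‖g_k‖²/λ̄; (ii) ‖d_k‖ ≤ d̄; (iii) E(U^{k+1}) ≤ E(U^k) + ν·t_k·⟪g_k, d_k⟫; and (iv) t_k ≥ min(2(1 − ν)·‖g_k‖²/(λ̄·M·d̄²), 1). Then lim_{k→∞} ‖∇E(U^k)‖ = 0. -/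
import Mathlib


open RealInnerProductSpace

/-- Gradient convergence of the regularized Newton–PCG method: under the descent bound,
direction norm bound, Armijo condition, and step size lower bound, the gradients of
the bounded-below objective tend to zero. -/
theorem newton_pcg_gradient_convergence
    (n : ℕ) (hn : 1 ≤ n)
    (En : EuclideanSpace ℝ (Fin n) → ℝ)
    (hEn : ContDiff ℝ 1 En)
    (hbdd : BddBelow (Set.range En))
    (ν lambar dbar M : ℝ)
    (hν0 : 0 < ν) (hν1 : ν < 1) (hlambar : 0 < lambar) (hdbar : 0 < dbar) (hM : 0 < M)
    (U d : ℕ → EuclideanSpace ℝ (Fin n)) (t : ℕ → ℝ)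
    (ht : ∀ k, t k ∈ Set.Ioc (0 : ℝ) 1)
    (hupd : ∀ k, U (k + 1) = U k + t k • d k)
    (hdesc : ∀ k, -⟪gradient En (U k), d k⟫ ≥ ‖gradient En (U k)‖ ^ 2 / lambar)
    (hdnorm : ∀ k, ‖d k‖ ≤ dbar)
    (harmijo : ∀ k, En (U (k + 1)) ≤ En (U k) + ν * t k * ⟪gradient En (U k), d k⟫)
    (htlow : ∀ k, t k ≥
      min (2 * (1 - ν) * ‖gradient En (U k)‖ ^ 2 / (lambar * M * dbar ^ 2)) 1) :
    Filter.Tendsto (fun k => ‖gradient En (U k)‖) Filter.atTop (nhds 0) := by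
  set g : ℕ → ℝ := fun k => ‖gradient En (U k)‖ with hg
  have hg0 : ∀ k, 0 ≤ g k := fun k => norm_nonneg _
  set c : ℝ := 2 * (1 - ν) / (lambar * M * dbar ^ 2) with hc
  have hcpos : 0 < c := by
    apply div_pos (by linarith) (by positivity)
  -- key decrease
  have hkey : ∀ k, En (U k) - En (U (k + 1)) ≥ ν / lambar * (min (c * g k ^ 2) 1 * g k ^ 2) := by
    intro k
    have hip : ⟪gradient En (U k), d k⟫ ≤ -(g k ^ 2 / lambar) := by
      have := hdesc k; linarith
    have ht1 := (ht k).1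
    have h1 : En (U (k + 1)) ≤ En (U k) - ν * t k * (g k ^ 2 / lambar) := by
      have := harmijo k
      nlinarith [mul_le_mul_of_nonneg_left hip (le_of_lt (mul_pos hν0 ht1))]
    have h2 : min (c * g k ^ 2) 1 ≤ t k := by
      have := htlow k
      have heq : 2 * (1 - ν) * g k ^ 2 / (lambar * M * dbar ^ 2) = c * g k ^ 2 := by
        rw [hc, div_mul_eq_mul_div]
      rw [← heq]; linarith
    have h3 : min (c * g k ^ 2) 1 * (g k ^ 2 / lambar) ≤ t k * (g k ^ 2 / lambar) := by
      apply mul_le_mul_of_nonneg_right h2 (by positivity)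
    have heq2 : ν / lambar * (min (c * g k ^ 2) 1 * g k ^ 2)
        = ν * (min (c * g k ^ 2) 1 * (g k ^ 2 / lambar)) := by ring
    have h4 := mul_le_mul_of_nonneg_left h3 hν0.le
    linarith
  have hmin0 : ∀ k, 0 ≤ min (c * g k ^ 2) 1 := by
    intro k; exact le_min (by positivity) zero_le_one
  -- E ∘ U is antitone
  have hanti : Antitone (fun k => En (U k)) := by
    apply antitone_nat_of_succ_le
    intro k
    have := hkey k
    nlinarith [mul_nonneg (hmin0 k) (sq_nonneg (g k)), mul_nonneg (le_of_lt (div_pos hν0 hlambar)) (mul_nonneg (hmin0 k) (sq_nonneg (g k)))]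
  have hbdd' : BddBelow (Set.range fun k => En (U k)) := by
    apply hbdd.mono
    rintro x ⟨k, rfl⟩; exact ⟨U k, rfl⟩
  obtain ⟨L, hL⟩ : ∃ L, Filter.Tendsto (fun k => En (U k)) Filter.atTop (nhds L) :=
    ⟨_, tendsto_atTop_ciInf hanti hbdd'⟩
  have hL' : Filter.Tendsto (fun k => En (U (k + 1))) Filter.atTop (nhds L) :=
    hL.comp (Filter.tendsto_add_atTop_nat 1)
  have hdiff : Filter.Tendsto (fun k => En (U k) - En (U (k + 1))) Filter.atTop (nhds 0) := by
    have := hL.sub hL'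
    simpa using this
  -- squeeze: h k := min(c g², 1) * g² → 0
  have hsq : Filter.Tendsto (fun k => min (c * g k ^ 2) 1 * g k ^ 2) Filter.atTop (nhds 0) := by
    refine squeeze_zero (g := fun k => (ν / lambar)⁻¹ * (En (U k) - En (U (k + 1))))
      (fun k => mul_nonneg (hmin0 k) (sq_nonneg _)) (fun k => ?_) ?_
    · have hk := hkey k
      have hpos : 0 < ν / lambar := div_pos hν0 hlambar
      calc min (c * g k ^ 2) 1 * g k ^ 2
          = (ν / lambar)⁻¹ * (ν / lambar * (min (c * g k ^ 2) 1 * g k ^ 2)) := by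
            rw [inv_mul_cancel_left₀ (ne_of_gt hpos)]
        _ ≤ (ν / lambar)⁻¹ * (En (U k) - En (U (k + 1))) :=
            mul_le_mul_of_nonneg_left hk (inv_nonneg.mpr hpos.le)
    · have h5 := hdiff.const_mul (ν / lambar)⁻¹
      simpa using h5
  -- conclude
  rw [Metric.tendsto_atTop]
  intro ε hε
  have hδ : 0 < min (c * ε ^ 2) 1 * ε ^ 2 := by
    apply mul_pos (lt_min (by positivity) one_pos) (by positivity)
  rw [Metric.tendsto_atTop] at hsq
  obtain ⟨N, hN⟩ := hsq _ hδ
  refine ⟨N, fun k hk => ?_⟩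
  have h1 := hN k hk
  rw [Real.dist_eq, sub_zero] at h1 ⊢
  rw [abs_of_nonneg (mul_nonneg (hmin0 k) (sq_nonneg _))] at h1
  rw [abs_of_nonneg (hg0 k)]
  by_contra hcon
  push_neg at hcon
  have hge : ε ^ 2 ≤ g k ^ 2 := by nlinarith
  have hmin : min (c * ε ^ 2) 1 ≤ min (c * g k ^ 2) 1 :=
    min_le_min (by nlinarith) le_rfl
  nlinarith [mul_le_mul hmin hge (by positivity) (hmin0 k)]
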